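/- (Double integral of the SO(3) exponential.) For every ω ∈ ℝ³ and every Δ ∈ ℝ, the iterated matrix-valued integral satisfies ∫₀^Δ ( ∫₀^τ exp_m((t ω)^∧) dt ) dτ = Γ₂(Δ ω) · Δ², where integrals of matrix-valued functions are taken entrywise. -/

import Mathlib

open Matrix

/-- The skew-symmetric (hat) matrix of a vector `φ ∈ ℝ³`, so that `skew φ *ᵥ x = φ × x`. -/
noncomputable def skew (φ : Fin 3 → ℝ) : Matrix (Fin 3) (Fin 3) ℝ :=
  !![0, -φ 2, φ 1; φ 2, 0, -φ 0; -φ 1, φ 0, 0]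

/-- `Γₘ(φ) = Σ_{n=0}^∞ (1/(n+m)!) φ̂ⁿ`. -/
noncomputable def Gamma (m : ℕ) (φ : Fin 3 → ℝ) : Matrix (Fin 3) (Fin 3) ℝ :=
  ∑' n : ℕ, (((n + m).factorial : ℝ))⁻¹ • skew φ ^ n

lemma skew_smul (t : ℝ) (ω : Fin 3 → ℝ) : skew (t • ω) = t • skew ω := by
  ext i j
  fin_cases i <;> fin_cases j <;>
    simp [skew, Matrix.smul_apply, smul_eq_mul]

lemma skew_entry_bound (ω : Fin 3 → ℝ) (i j : Fin 3) :
    |skew ω i j| ≤ |ω 0| + |ω 1| + |ω 2| := by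
  fin_cases i <;> fin_cases j <;> simp [skew, abs_neg] <;>
    linarith [abs_nonneg (ω 0), abs_nonneg (ω 1), abs_nonneg (ω 2)]

lemma pow_entry_bound (ω : Fin 3 → ℝ) (n : ℕ) (i j : Fin 3) :
    |(skew ω ^ n) i j| ≤ (3 * (|ω 0| + |ω 1| + |ω 2|)) ^ n := by
  set K := |ω 0| + |ω 1| + |ω 2| with hK
  have hK0 : 0 ≤ K := by positivity
  induction n generalizing i j with
  | zero => simp [Matrix.one_apply]; split <;> simp
  | succ n ih =>
    rw [pow_succ, pow_succ]
    have : (skew ω ^ n * skew ω) i j = ∑ k, (skew ω ^ n) i k * skew ω k j :=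
      Matrix.mul_apply
    rw [this]
    calc |∑ k, (skew ω ^ n) i k * skew ω k j|
        ≤ ∑ k, |(skew ω ^ n) i k * skew ω k j| := Finset.abs_sum_le_sum_abs _ _
      _ ≤ ∑ _k : Fin 3, (3 * K) ^ n * K := by
          apply Finset.sum_le_sum
          intro k _
          rw [abs_mul]
          exact mul_le_mul (ih i k) (skew_entry_bound ω k j) (abs_nonneg _)
            (by positivity)
      _ = (3 * K) ^ n * (3 * K) := by
          simp [Finset.sum_const]; ring

/-- Integral of a power series (with shifted exponent) term by term. -/
lemma integral_tsum_pow (k : ℕ) (a : ℕ → ℝ)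
    (ha : ∀ r : ℝ, 0 ≤ r → Summable fun n => |a n| * r ^ n) (b : ℝ) :
    ∫ t in (0:ℝ)..b, ∑' n : ℕ, a n * t ^ (n + k)
      = ∑' n : ℕ, a n * b ^ (n + k + 1) / (n + k + 1) := by
  have hf : ∀ n : ℕ, Continuous fun t : ℝ => a n * t ^ (n + k) := by
    intro n; continuity
  set f : ℕ → C(ℝ, ℝ) := fun n => ⟨fun t => a n * t ^ (n + k), hf n⟩ with hfdef
  have hsum : Summable fun n : ℕ =>
      ‖(f n).restrict (⟨Set.uIcc 0 b, isCompact_uIcc⟩ : TopologicalSpace.Compacts ℝ)‖ := by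
    have h2 : Summable fun n : ℕ => |a n| * |b| ^ (n + k) := by
      have := (ha |b| (abs_nonneg b)).mul_left (|b| ^ k)
      apply this.congr
      intro n
      rw [pow_add]
      ring
    apply Summable.of_nonneg_of_le (fun n => norm_nonneg _) _ h2
    intro n
    apply ContinuousMap.norm_le _ (by positivity) |>.2
    rintro ⟨x, hx⟩
    have hxb : |x| ≤ |b| := by
      rw [abs_le]
      constructor
      · calc -|b| ≤ min 0 b := by
              rcases le_total 0 b with h | h <;> simp [min_eq_left, min_eq_right, h, abs_of_nonneg, abs_of_nonpos] <;> linarith [abs_nonneg b, neg_abs_le b]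
          _ ≤ x := hx.1
      · calc x ≤ max 0 b := hx.2
          _ ≤ |b| := by
              rcases le_total 0 b with h | h <;> simp [h, abs_of_nonneg, abs_of_nonpos] <;> linarith [abs_nonneg b, le_abs_self b]
    simp only [ContinuousMap.restrict_apply, hfdef, ContinuousMap.coe_mk]
    rw [Real.norm_eq_abs, abs_mul, abs_pow]
    exact mul_le_mul_of_nonneg_left (pow_le_pow_left₀ (abs_nonneg x) hxb _) (abs_nonneg _)
  have := intervalIntegral.tsum_intervalIntegral_eq_of_summable_norm (a := 0) (b := b) hsum
  have heq : (∫ t in (0:ℝ)..b, ∑' n : ℕ, f n t) = ∫ t in (0:ℝ)..b, ∑' n : ℕ, a n * t ^ (n + k) := rfl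
  rw [← heq, ← this]
  apply tsum_congr
  intro n
  have : ∫ t in (0:ℝ)..b, f n t = ∫ t in (0:ℝ)..b, a n * t ^ (n + k) := rfl
  rw [this, intervalIntegral.integral_const_mul, integral_pow]
  push_cast
  ring

lemma summable_abs_coeff (ω : Fin 3 → ℝ) (m : ℕ) (r : ℝ) (i j : Fin 3) :
    Summable fun n : ℕ => |(((n + m).factorial : ℝ))⁻¹ * (skew ω ^ n) i j * r ^ n| := by
  obtain ⟨K, hK0, hb⟩ : ∃ K : ℝ, 0 ≤ K ∧ ∀ n i j, |(skew ω ^ n) i j| ≤ (3 * K) ^ n :=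
    ⟨_, by positivity, pow_entry_bound ω⟩
  have hbig : Summable fun n : ℕ => (3 * K * |r|) ^ n / n.factorial :=
    Real.summable_pow_div_factorial _
  apply Summable.of_nonneg_of_le (fun n => abs_nonneg _) _ hbig
  intro n
  have hfac : (n.factorial : ℝ) ≤ ((n + m).factorial : ℝ) := by
    exact_mod_cast Nat.factorial_le (Nat.le_add_right n m)
  have hfac0 : (0:ℝ) < n.factorial := by exact_mod_cast n.factorial_pos
  calc |(((n + m).factorial : ℝ))⁻¹ * (skew ω ^ n) i j * r ^ n|
      = (((n + m).factorial : ℝ))⁻¹ * |(skew ω ^ n) i j| * |r| ^ n := by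
        rw [abs_mul, abs_mul, abs_inv, abs_pow,
          abs_of_nonneg (by positivity : (0:ℝ) ≤ ((n + m).factorial : ℝ))]
    _ ≤ ((n.factorial : ℝ))⁻¹ * (3 * K) ^ n * |r| ^ n := by
        apply mul_le_mul_of_nonneg_right _ (by positivity)
        exact mul_le_mul (inv_anti₀ hfac0 hfac) (hb n i j) (abs_nonneg _) (by positivity)
    _ = (3 * K * |r|) ^ n / n.factorial := by
        rw [div_eq_mul_inv, mul_pow, mul_pow]
        ring

lemma tsum_matrix_apply {f : ℕ → Matrix (Fin 3) (Fin 3) ℝ}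
    (h : ∀ i j, Summable fun n => f n i j) (i j : Fin 3) :
    (∑' n, f n) i j = ∑' n, f n i j := by
  have h1 : Summable f := by
    rw [show f = fun n => (f n : Fin 3 → Fin 3 → ℝ) from rfl]
    exact Pi.summable.2 fun i' => Pi.summable.2 fun j' => h i' j'
  exact (congrFun (tsum_apply h1 (x := i)) j).trans (tsum_apply (Pi.summable.1 h1 i))

lemma exp_entry (ω : Fin 3 → ℝ) (t : ℝ) (i j : Fin 3) :
    NormedSpace.exp (skew (t • ω)) i j
      = ∑' n : ℕ, ((n.factorial : ℝ))⁻¹ * (skew ω ^ n) i j * t ^ n := by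
  rw [NormedSpace.exp_eq_tsum ℝ]
  have hrw : ∀ n : ℕ, ((n.factorial : ℝ))⁻¹ • skew (t • ω) ^ n
      = fun i' j' => ((n.factorial : ℝ))⁻¹ * (skew ω ^ n) i' j' * t ^ n := by
    intro n
    ext i' j'
    rw [skew_smul, smul_pow]
    simp [Matrix.smul_apply, smul_eq_mul]
    ring
  simp only [hrw]
  exact tsum_matrix_apply (f := fun n => fun i' j' : Fin 3 =>
    ((n.factorial : ℝ))⁻¹ * (skew ω ^ n) i' j' * t ^ n)
    (fun i' j' => ((summable_abs_coeff ω 0 t i' j').of_abs).congr (by simp)) i j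

lemma summable_abs_coeff' (ω : Fin 3 → ℝ) (m : ℕ) (r : ℝ) (hr : 0 ≤ r) (i j : Fin 3) :
    Summable fun n : ℕ => |(((n + m).factorial : ℝ))⁻¹ * (skew ω ^ n) i j| * r ^ n := by
  apply (summable_abs_coeff ω m r i j).congr
  intro n
  rw [abs_mul, abs_pow, abs_of_nonneg hr]

/-- **Double integral of the SO(3) exponential** (entrywise):
`∫₀^Δ ∫₀^τ exp_m((t ω)^∧) dt dτ = Γ₂(Δ ω) Δ²`. -/
theorem double_integral_so3_exp (ω : Fin 3 → ℝ) (Δ : ℝ) (i j : Fin 3) :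
    (∫ τ in (0 : ℝ)..Δ, ∫ t in (0 : ℝ)..τ, NormedSpace.exp (skew (t • ω)) i j) =
      ((Δ ^ 2) • Gamma 2 (Δ • ω)) i j := by
  set c : ℕ → ℝ := fun n => (skew ω ^ n) i j with hc
  -- inner integral
  have inner : ∀ τ : ℝ, (∫ t in (0 : ℝ)..τ, NormedSpace.exp (skew (t • ω)) i j)
      = ∑' n : ℕ, (((n + 1).factorial : ℝ))⁻¹ * c n * τ ^ (n + 1) := by
    intro τ
    have h0 := integral_tsum_pow 0 (fun n => ((n.factorial : ℝ))⁻¹ * c n)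
      (fun r hr => by
        simpa using summable_abs_coeff' ω 0 r hr i j) τ
    simp only [Nat.add_zero, Nat.cast_zero, add_zero] at h0
    calc (∫ t in (0 : ℝ)..τ, NormedSpace.exp (skew (t • ω)) i j)
        = ∫ t in (0 : ℝ)..τ, ∑' n : ℕ, ((n.factorial : ℝ))⁻¹ * c n * t ^ n := by
          apply intervalIntegral.integral_congr
          intro t _
          exact exp_entry ω t i j
      _ = ∑' n : ℕ, ((n.factorial : ℝ))⁻¹ * c n * τ ^ (n + 1) / (↑n + 1) := h0
      _ = ∑' n : ℕ, (((n + 1).factorial : ℝ))⁻¹ * c n * τ ^ (n + 1) := by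
          apply tsum_congr
          intro n
          have h1 : ((n + 1).factorial : ℝ) = (n + 1) * n.factorial := by
            push_cast [Nat.factorial_succ]; ring
          have h2 : (0:ℝ) < n.factorial := by exact_mod_cast n.factorial_pos
          have h3 : (0:ℝ) < (n:ℝ) + 1 := by positivity
          rw [h1, mul_inv]
          ring
  -- outer integral
  have outer : (∫ τ in (0 : ℝ)..Δ, ∑' n : ℕ, (((n + 1).factorial : ℝ))⁻¹ * c n * τ ^ (n + 1))
      = ∑' n : ℕ, (((n + 2).factorial : ℝ))⁻¹ * c n * Δ ^ (n + 2) := by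
    have h0 := integral_tsum_pow 1 (fun n => (((n + 1).factorial : ℝ))⁻¹ * c n)
      (fun r hr => by
        simpa using summable_abs_coeff' ω 1 r hr i j) Δ
    rw [h0]
    apply tsum_congr
    intro n
    have h1 : ((n + 2).factorial : ℝ) = (n + 2) * (n + 1).factorial := by
      have : (n + 2).factorial = (n + 2) * (n + 1).factorial := Nat.factorial_succ (n + 1)
      push_cast [this]; ring
    have h2 : (0:ℝ) < (n + 1).factorial := by exact_mod_cast (n + 1).factorial_pos
    have h3 : (0:ℝ) < (n:ℝ) + 2 := by positivity
    have h4 : (n : ℝ) + 1 + 1 = (n : ℝ) + 2 := by ring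
    push_cast
    rw [show n + 1 + 1 = n + 2 from rfl, h1, mul_inv]
    push_cast
    ring
  -- RHS
  have rhs : ((Δ ^ 2) • Gamma 2 (Δ • ω)) i j
      = ∑' n : ℕ, (((n + 2).factorial : ℝ))⁻¹ * c n * Δ ^ (n + 2) := by
    have hrw : ∀ n : ℕ, (((n + 2).factorial : ℝ))⁻¹ • skew (Δ • ω) ^ n
        = fun i' j' => (((n + 2).factorial : ℝ))⁻¹ * (skew ω ^ n) i' j' * Δ ^ n := by
      intro n
      ext i' j'
      rw [skew_smul, smul_pow]
      simp [Matrix.smul_apply, smul_eq_mul]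
      ring
    have hG : Gamma 2 (Δ • ω) i j
        = ∑' n : ℕ, (((n + 2).factorial : ℝ))⁻¹ * c n * Δ ^ n := by
      rw [Gamma]
      simp only [hrw]
      exact tsum_matrix_apply (f := fun n => fun i' j' : Fin 3 =>
        (((n + 2).factorial : ℝ))⁻¹ * (skew ω ^ n) i' j' * Δ ^ n)
        (fun i' j' => (summable_abs_coeff ω 2 Δ i' j').of_abs) i j
    rw [Matrix.smul_apply, hG, smul_eq_mul, ← tsum_mul_left]
    apply tsum_congr
    intro n
    ring
  rw [rhs, ← outer]
  apply intervalIntegral.integral_congr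
  intro τ _
  exact inner τ
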